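/- Let m > 0 and let h : [z₀, ∞) → ℂ be C² and compactly supported (via cutoffs) with |∂_z^k h(z)| ≲ z^{1/2+ε} for k = 0, 1, 2 and some ε > 0, uniformly on its support, where z₀ > 0. Then for t ≥ 1, | ∫_0^∞ e^{-it√(z²+m²)} (z^{-2-ε'} h(z)/√(z²+m²)) dz | ≲ t^{-2} for any ε' > ε, where the implicit constant is independent of t. -/

import Mathlib

set_option autoImplicit false
set_option maxHeartbeats 1000000

open MeasureTheory Real Set

noncomputable section IBPAux

/-- The phase `φ(z) = √(z² + m²)`. -/
def phiF (m z : ℝ) : ℝ := Real.sqrt (z ^ 2 + m ^ 2)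

lemma phiF_pos {m : ℝ} (hm : 0 < m) (z : ℝ) : 0 < phiF m z :=
  Real.sqrt_pos.2 (by positivity)

lemma phiF_continuous (m : ℝ) : Continuous (phiF m) := by
  unfold phiF; fun_prop

lemma hasDerivAt_phiF {m : ℝ} (hm : 0 < m) (z : ℝ) :
    HasDerivAt (phiF m) (z / phiF m z) z := by
  have h1 : HasDerivAt (fun z : ℝ => z ^ 2 + m ^ 2) (2 * z) z := by
    simpa using (hasDerivAt_pow 2 z).add_const (m ^ 2)
  have h2 := (Real.hasDerivAt_sqrt (x := z ^ 2 + m ^ 2) (by positivity)).comp z h1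
  have hφ : (0 : ℝ) < phiF m z := phiF_pos hm z
  refine h2.congr_deriv ?_
  have : Real.sqrt (z ^ 2 + m ^ 2) = phiF m z := rfl
  rw [this]
  field_simp

/-- The oscillatory factor `F(t,z) = e^{-it φ(z)}`. -/
def Fph (m t z : ℝ) : ℂ := Complex.exp (-Complex.I * t * (phiF m z : ℂ))

lemma Fph_continuous (m t : ℝ) : Continuous (Fph m t) := by
  apply Complex.continuous_exp.comp
  exact continuous_const.mul (Complex.continuous_ofReal.comp (phiF_continuous m))

lemma hasDerivAt_Fph {m : ℝ} (hm : 0 < m) (t z : ℝ) :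
    HasDerivAt (Fph m t)
      (-Complex.I * t * ((z / phiF m z : ℝ) : ℂ) * Fph m t z) z := by
  have h1 : HasDerivAt (fun z : ℝ => ((phiF m z : ℝ) : ℂ)) ((z / phiF m z : ℝ) : ℂ) z :=
    (hasDerivAt_phiF hm z).ofReal_comp
  have h2 : HasDerivAt (fun z : ℝ => -Complex.I * t * (phiF m z : ℂ))
      (-Complex.I * t * ((z / phiF m z : ℝ) : ℂ)) z := h1.const_mul _
  have h3 := h2.cexp
  refine h3.congr_deriv ?_
  simp only [Fph]
  ring

lemma norm_Fph (m t z : ℝ) : ‖Fph m t z‖ = 1 := by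
  rw [Fph, Complex.norm_exp]
  have : (-Complex.I * t * (phiF m z : ℂ)).re = 0 := by
    simp [Complex.mul_re, Complex.mul_im]
  rw [this, Real.exp_zero]

/-- One integration by parts step: for a `C¹` compactly supported `w`,
`∫ (z/φ) F w = -(i/t) ∫ F w'`. -/
lemma ibp_step {m : ℝ} (hm : 0 < m) {t : ℝ} (ht : t ≠ 0) (w w' : ℝ → ℂ)
    (hd : ∀ z, HasDerivAt w (w' z) z) (hw' : Continuous w')
    (hwc : HasCompactSupport w) :
    ∫ z : ℝ, ((z / phiF m z : ℝ) : ℂ) * Fph m t z * w z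
      = -(Complex.I / t) * ∫ z : ℝ, Fph m t z * w' z := by
  have hF : Continuous (Fph m t) := Fph_continuous m t
  have hwcont : Continuous w := by
    rw [continuous_iff_continuousAt]; exact fun z => (hd z).continuousAt
  have hw'eq : w' = deriv w := funext fun z => ((hd z).deriv).symm
  have hw'c : HasCompactSupport w' := by rw [hw'eq]; exact hwc.deriv
  have hq : Continuous fun z : ℝ => ((z / phiF m z : ℝ) : ℂ) :=
    Complex.continuous_ofReal.comp
      (continuous_id.div (phiF_continuous m) fun z => (phiF_pos hm z).ne')
  have hF'c : Continuous fun z : ℝ =>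
      -Complex.I * t * ((z / phiF m z : ℝ) : ℂ) * Fph m t z :=
    ((continuous_const.mul hq).mul hF)
  have huv' : Integrable (fun z : ℝ => Fph m t z * w' z) :=
    (hF.mul hw').integrable_of_hasCompactSupport hw'c.mul_left
  have hu'v : Integrable (fun z : ℝ =>
      (-Complex.I * t * ((z / phiF m z : ℝ) : ℂ) * Fph m t z) * w z) :=
    (hF'c.mul hwcont).integrable_of_hasCompactSupport hwc.mul_left
  have huv : Integrable (fun z : ℝ => Fph m t z * w z) :=
    (hF.mul hwcont).integrable_of_hasCompactSupport hwc.mul_left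
  have key := integral_mul_deriv_eq_deriv_mul_of_integrable
    (u := Fph m t) (v := w)
    (u' := fun z => -Complex.I * t * ((z / phiF m z : ℝ) : ℂ) * Fph m t z)
    (v' := w') (fun z _ => hasDerivAt_Fph hm t z) (fun z _ => hd z) huv' hu'v huv
  -- key : ∫ F w' = - ∫ F' w
  have key2 : (∫ z : ℝ, Fph m t z * w' z)
      = -(-Complex.I * t) * ∫ z : ℝ, ((z / phiF m z : ℝ) : ℂ) * Fph m t z * w z := by
    rw [key]
    rw [show (fun z : ℝ => (-Complex.I * t * ((z / phiF m z : ℝ) : ℂ) * Fph m t z) * w z)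
        = fun z : ℝ => (-Complex.I * t) * (((z / phiF m z : ℝ) : ℂ) * Fph m t z * w z)
      from funext fun z => by ring]
    rw [integral_const_mul]
    ring
  have ht' : (t : ℂ) ≠ 0 := by exact_mod_cast ht
  rw [key2]
  have hI : Complex.I * Complex.I = -1 := Complex.I_mul_I
  have ht'' : (t : ℂ) * (t : ℂ)⁻¹ = 1 := mul_inv_cancel₀ ht'
  linear_combination ((t : ℂ)⁻¹ * t *
      (∫ z : ℝ, ((z / phiF m z : ℝ) : ℂ) * Fph m t z * w z)) * hI
    - (∫ z : ℝ, ((z / phiF m z : ℝ) : ℂ) * Fph m t z * w z) * ht''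

/-- `u(z) = z^{-(3+ε')} h(z)`. -/
def uF (ε' : ℝ) (h : ℝ → ℂ) (z : ℝ) : ℂ := ((z ^ (-(3 + ε')) : ℝ) : ℂ) * h z

def uF' (ε' : ℝ) (h : ℝ → ℂ) (z : ℝ) : ℂ :=
  ((-(3 + ε') * z ^ (-(3 + ε') - 1) : ℝ) : ℂ) * h z
    + ((z ^ (-(3 + ε')) : ℝ) : ℂ) * deriv h z

def uF'' (ε' : ℝ) (h : ℝ → ℂ) (z : ℝ) : ℂ :=
  ((-(3 + ε') * (-(3 + ε') - 1) * z ^ (-(3 + ε') - 2) : ℝ) : ℂ) * h z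
    + ((2 * -(3 + ε') * z ^ (-(3 + ε') - 1) : ℝ) : ℂ) * deriv h z
    + ((z ^ (-(3 + ε')) : ℝ) : ℂ) * deriv (deriv h) z

def vF (m ε' : ℝ) (h : ℝ → ℂ) (z : ℝ) : ℂ :=
  ((phiF m z / z : ℝ) : ℂ) * uF' ε' h z

def vF' (m ε' : ℝ) (h : ℝ → ℂ) (z : ℝ) : ℂ :=
  ((-(m ^ 2) / (phiF m z * z ^ 2) : ℝ) : ℂ) * uF' ε' h z
    + ((phiF m z / z : ℝ) : ℂ) * uF'' ε' h z

end IBPAux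

section Glue

/-- Gluing continuity: zero below `z₀ > 0` and continuous on `(0,∞)`. -/
lemma glue_cont {z₀ : ℝ} (hz₀ : 0 < z₀) {f : ℝ → ℂ} (h0 : ∀ z < z₀, f z = 0)
    (hc : ∀ z, 0 < z → ContinuousAt f z) : Continuous f := by
  rw [continuous_iff_continuousAt]
  intro z
  rcases lt_or_ge z z₀ with hz | hz
  · have hev : f =ᶠ[nhds z] fun _ => (0 : ℂ) := by
      filter_upwards [Iio_mem_nhds hz] with y hy using h0 y hy
    exact ContinuousAt.congr continuousAt_const hev.symm
  · exact hc z (hz₀.trans_le hz)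

/-- Gluing derivatives: zero below `z₀ > 0` and differentiable on `(0,∞)`. -/
lemma glue_deriv {z₀ : ℝ} (hz₀ : 0 < z₀) {f f' : ℝ → ℂ}
    (h0 : ∀ z < z₀, f z = 0) (h0' : ∀ z < z₀, f' z = 0)
    (hd : ∀ z, 0 < z → HasDerivAt f (f' z) z) : ∀ z, HasDerivAt f (f' z) z := by
  intro z
  rcases lt_or_ge z z₀ with hz | hz
  · have hev : f =ᶠ[nhds z] fun _ => (0 : ℂ) := by
      filter_upwards [Iio_mem_nhds hz] with y hy using h0 y hy
    rw [h0' z hz]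
    exact (hasDerivAt_const z (0 : ℂ)).congr_of_eventuallyEq hev
  · exact hd z (hz₀.trans_le hz)

end Glue

/-- High-energy integration by parts (abstracting Lemma 4.7): a twice-differentiable
compactly supported amplitude, supported away from zero and growing at most like
`z^{1/2+ε}`, multiplied by `z^{-2-ε'}` produces `t⁻²` decay. -/
theorem high_energy_ibp (m z₀ ε ε' : ℝ) (hm : 0 < m) (hz₀ : 0 < z₀)
    (hε : 0 < ε) (hε' : ε < ε')
    (h : ℝ → ℂ) (hh : ContDiff ℝ 2 h) (hhc : HasCompactSupport h)
    (hsupp : ∀ z, z < z₀ → h z = 0)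
    (c : ℝ)
    (hbound : ∀ k ≤ 2, ∀ z, z₀ ≤ z → ‖iteratedDeriv k h z‖ ≤ c * z ^ (1 / 2 + ε)) :
    ∃ C > 0, ∀ t : ℝ, 1 ≤ t →
      ‖∫ z in Ioi (0 : ℝ),
          Complex.exp (-Complex.I * t * ((Real.sqrt (z ^ 2 + m ^ 2) : ℝ) : ℂ))
            * ((z ^ (-(2 + ε')) / Real.sqrt (z ^ 2 + m ^ 2) : ℝ) : ℂ) * h z‖
        ≤ C * t ^ (-2 : ℤ) := by
  -- Basic regularity facts about h
  have hh2 : ContDiff ℝ (1 + 1 : ℕ) h := by exact_mod_cast hh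
  have hdiff : Differentiable ℝ h := hh.differentiable (by norm_num)
  have hd1 : ContDiff ℝ 1 (deriv h) := by
    have := contDiff_succ_iff_deriv.mp (show ContDiff ℝ ((1 : WithTop ℕ∞) + 1) h by
      exact_mod_cast hh)
    exact this.2.2
  have hdiff' : Differentiable ℝ (deriv h) := (contDiff_one_iff_deriv.mp hd1).1
  have hcont'' : Continuous (deriv (deriv h)) := (contDiff_one_iff_deriv.mp hd1).2
  -- vanishing of derivatives below z₀
  have hsupp' : ∀ z, z < z₀ → deriv h z = 0 := by
    intro z hz
    have hev : h =ᶠ[nhds z] fun _ => (0 : ℂ) := by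
      filter_upwards [Iio_mem_nhds hz] with y hy using hsupp y hy
    rw [hev.deriv_eq]; simp
  have hsupp'' : ∀ z, z < z₀ → deriv (deriv h) z = 0 := by
    intro z hz
    have hev : deriv h =ᶠ[nhds z] fun _ => (0 : ℂ) := by
      filter_upwards [Iio_mem_nhds hz] with y hy using hsupp' y hy
    rw [hev.deriv_eq]; simp
  -- vanishing of u', u'', v, v' below z₀
  have huF0 : ∀ z, z < z₀ → uF ε' h z = 0 := fun z hz => by simp [uF, hsupp z hz]
  have huF'0 : ∀ z, z < z₀ → uF' ε' h z = 0 := fun z hz => by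
    simp [uF', hsupp z hz, hsupp' z hz]
  have huF''0 : ∀ z, z < z₀ → uF'' ε' h z = 0 := fun z hz => by
    simp [uF'', hsupp z hz, hsupp' z hz, hsupp'' z hz]
  have hvF0 : ∀ z, z < z₀ → vF m ε' h z = 0 := fun z hz => by
    simp [vF, huF'0 z hz]
  have hvF'0 : ∀ z, z < z₀ → vF' m ε' h z = 0 := fun z hz => by
    simp [vF', huF'0 z hz, huF''0 z hz]
  -- derivative of uF
  have hduF : ∀ z, HasDerivAt (uF ε' h) (uF' ε' h z) z := by
    apply glue_deriv hz₀ huF0 huF'0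
    intro z hz
    have hr := Real.hasDerivAt_rpow_const (x := z) (p := -(3 + ε')) (Or.inl hz.ne')
    have hmul := (hr.ofReal_comp).mul (hdiff z).hasDerivAt
    exact hmul
  -- derivative of uF'
  have hduF' : ∀ z, HasDerivAt (uF' ε' h) (uF'' ε' h z) z := by
    apply glue_deriv hz₀ huF'0 huF''0
    intro z hz
    have hr1 := Real.hasDerivAt_rpow_const (x := z) (p := -(3 + ε') - 1) (Or.inl hz.ne')
    have hr := Real.hasDerivAt_rpow_const (x := z) (p := -(3 + ε')) (Or.inl hz.ne')
    have ht1 := ((hr1.const_mul (-(3 + ε'))).ofReal_comp).mul (hdiff z).hasDerivAt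
    have ht2 := (hr.ofReal_comp).mul (hdiff' z).hasDerivAt
    have hsum := ht1.add ht2
    refine hsum.congr_deriv ?_
    simp only [uF'']
    push_cast
    ring
  -- derivative of vF
  have hdvF : ∀ z, HasDerivAt (vF m ε' h) (vF' m ε' h z) z := by
    apply glue_deriv hz₀ hvF0 hvF'0
    intro z hz
    have hφ : (0 : ℝ) < phiF m z := phiF_pos hm z
    have hφ2 : phiF m z ^ 2 = z ^ 2 + m ^ 2 := Real.sq_sqrt (by positivity)
    have ha : HasDerivAt (fun y : ℝ => phiF m y / y)
        ((z / phiF m z * z - phiF m z * 1) / z ^ 2) z :=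
      (hasDerivAt_phiF hm z).div (hasDerivAt_id z) hz.ne'
    have ha' : (z / phiF m z * z - phiF m z * 1) / z ^ 2
        = -(m ^ 2) / (phiF m z * z ^ 2) := by
      rw [div_eq_div_iff (by positivity) (by positivity)]
      field_simp
      linear_combination (-1 : ℝ) * hφ2
    rw [ha'] at ha
    have hmul := (ha.ofReal_comp).mul (hduF' z)
    exact hmul
  -- continuity of uF', uF''
  have hcont' : Continuous (deriv h) := hd1.continuous
  have hcuF' : Continuous (uF' ε' h) := by
    apply glue_cont hz₀ huF'0
    intro z hz
    exact ((Complex.continuous_ofReal.continuousAt.comp'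
        (continuousAt_const.mul (Real.continuousAt_rpow_const z _ (Or.inl hz.ne')))).mul
        hh.continuous.continuousAt).add
      ((Complex.continuous_ofReal.continuousAt.comp'
        (Real.continuousAt_rpow_const z _ (Or.inl hz.ne'))).mul
        hcont'.continuousAt)
  have hcuF'' : Continuous (uF'' ε' h) := by
    apply glue_cont hz₀ huF''0
    intro z hz
    exact (((Complex.continuous_ofReal.continuousAt.comp'
        (continuousAt_const.mul (Real.continuousAt_rpow_const z _ (Or.inl hz.ne')))).mul
        hh.continuous.continuousAt).add
      ((Complex.continuous_ofReal.continuousAt.comp'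
        (continuousAt_const.mul (Real.continuousAt_rpow_const z _ (Or.inl hz.ne')))).mul
        hcont'.continuousAt)).add
      ((Complex.continuous_ofReal.continuousAt.comp'
        (Real.continuousAt_rpow_const z _ (Or.inl hz.ne'))).mul
        hcont''.continuousAt)
  have hcvF' : Continuous (vF' m ε' h) := by
    apply glue_cont hz₀ hvF'0
    intro z hz
    have hφ : (0 : ℝ) < phiF m z := phiF_pos hm z
    have hne : phiF m z * z ^ 2 ≠ 0 := by positivity
    exact ((Complex.continuous_ofReal.continuousAt.comp'
        (continuousAt_const.div
          ((phiF_continuous m).continuousAt.mul (continuous_pow 2).continuousAt) hne)).mul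
        hcuF'.continuousAt).add
      ((Complex.continuous_ofReal.continuousAt.comp'
        ((phiF_continuous m).continuousAt.div continuousAt_id hz.ne')).mul
        hcuF''.continuousAt)
  -- compact support
  have hsuppU : HasCompactSupport (uF ε' h) := by
    show HasCompactSupport ((fun z : ℝ => ((z ^ (-(3 + ε')) : ℝ) : ℂ)) * h)
    exact hhc.mul_left
  have hsuppU' : HasCompactSupport (uF' ε' h) := by
    show HasCompactSupport ((fun z : ℝ => ((-(3 + ε') * z ^ (-(3 + ε') - 1) : ℝ) : ℂ)) * h
      + (fun z : ℝ => ((z ^ (-(3 + ε')) : ℝ) : ℂ)) * deriv h)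
    exact hhc.mul_left.add hhc.deriv.mul_left
  have hsuppV : HasCompactSupport (vF m ε' h) := by
    show HasCompactSupport ((fun z : ℝ => ((phiF m z / z : ℝ) : ℂ)) * uF' ε' h)
    exact hsuppU'.mul_left
  -- the constant
  set C₀ : ℝ := ∫ z : ℝ, ‖vF' m ε' h z‖ with hC₀
  have hC₀nn : 0 ≤ C₀ := integral_nonneg fun z => norm_nonneg _
  refine ⟨C₀ + 1, by linarith, fun t ht => ?_⟩
  have ht0 : (0 : ℝ) < t := lt_of_lt_of_le one_pos ht
  have ht0' : t ≠ 0 := ht0.ne'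
  -- Step A: rewrite as a full-line integral of (z/φ) F u
  have hA : (∫ z in Ioi (0 : ℝ),
        Complex.exp (-Complex.I * t * ((Real.sqrt (z ^ 2 + m ^ 2) : ℝ) : ℂ))
          * ((z ^ (-(2 + ε')) / Real.sqrt (z ^ 2 + m ^ 2) : ℝ) : ℂ) * h z)
      = ∫ z : ℝ, ((z / phiF m z : ℝ) : ℂ) * Fph m t z * uF ε' h z := by
    rw [setIntegral_congr_fun (f := fun z : ℝ =>
        Complex.exp (-Complex.I * t * ((Real.sqrt (z ^ 2 + m ^ 2) : ℝ) : ℂ))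
          * ((z ^ (-(2 + ε')) / Real.sqrt (z ^ 2 + m ^ 2) : ℝ) : ℂ) * h z)
        (g := fun z : ℝ => ((z / phiF m z : ℝ) : ℂ) * Fph m t z * uF ε' h z)
        measurableSet_Ioi ?_]
    · exact setIntegral_eq_integral_of_forall_compl_eq_zero fun z hz => by
        have hz' : z < z₀ := lt_of_le_of_lt (by simpa using hz) hz₀
        simp [huF0 z hz']
    · intro z hz
      have hz' : (0 : ℝ) < z := hz
      have hφ : (0 : ℝ) < phiF m z := phiF_pos hm z
      have hzz : z ^ (-(2 + ε')) = z * z ^ (-(3 + ε')) := by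
        rw [show -(2 + ε') = 1 + -(3 + ε') by ring, Real.rpow_add hz', Real.rpow_one]
      simp only [uF, Fph, phiF]
      rw [hzz]
      push_cast
      ring
  rw [hA, ibp_step hm ht0' (uF ε' h) (uF' ε' h) hduF hcuF' hsuppU]
  -- Step C: switch to vF
  have hC : (∫ z : ℝ, Fph m t z * uF' ε' h z)
      = ∫ z : ℝ, ((z / phiF m z : ℝ) : ℂ) * Fph m t z * vF m ε' h z := by
    apply integral_congr_ae
    filter_upwards with z
    rcases lt_or_ge 0 z with hz | hz
    · have hφ : (0 : ℝ) < phiF m z := phiF_pos hm z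
      have h1 : (z / phiF m z) * (phiF m z / z) = 1 := by field_simp
      rw [vF, show ((z / phiF m z : ℝ) : ℂ) * Fph m t z
            * (((phiF m z / z : ℝ) : ℂ) * uF' ε' h z)
          = (((z / phiF m z) * (phiF m z / z) : ℝ) : ℂ) * (Fph m t z * uF' ε' h z) by
        push_cast; ring, h1]
      simp
    · have h0 : uF' ε' h z = 0 := huF'0 z (lt_of_le_of_lt hz hz₀)
      simp [vF, h0]
  rw [hC, ibp_step hm ht0' (vF m ε' h) (vF' m ε' h) hdvF hcvF' hsuppV]
  -- Final estimate
  have hJ : ‖∫ z : ℝ, Fph m t z * vF' m ε' h z‖ ≤ C₀ := by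
    refine (norm_integral_le_integral_norm _).trans_eq ?_
    rw [hC₀]
    apply integral_congr_ae
    filter_upwards with z
    rw [norm_mul, norm_Fph, one_mul]
  have htn : ‖-(Complex.I / (t : ℂ))‖ = 1 / t := by
    rw [norm_neg, norm_div, Complex.norm_I, Complex.norm_real,
      Real.norm_eq_abs, abs_of_pos ht0]
  rw [norm_mul, norm_mul, htn]
  have hfin : (1 / t) * ((1 / t) * ‖∫ z : ℝ, Fph m t z * vF' m ε' h z‖)
      ≤ (1 / t) * ((1 / t) * C₀) := by
    have h1t : (0 : ℝ) ≤ 1 / t := by positivity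
    exact mul_le_mul_of_nonneg_left (mul_le_mul_of_nonneg_left hJ h1t) h1t
  refine hfin.trans ?_
  have hzpow : (t : ℝ) ^ (-2 : ℤ) = (t * t)⁻¹ := by
    rw [zpow_neg, zpow_two]
  rw [hzpow]
  have heq : 1 / t * (1 / t * C₀) = C₀ * (t * t)⁻¹ := by
    field_simp
  rw [heq]
  have hpos : (0 : ℝ) < (t * t)⁻¹ := by positivity
  nlinarith
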